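/- Fix β > 0. Then lim_{N→∞} (1/N)·ln g_{Nβ} = 1 − ln√(2π) + β/2 − (β/2)·ln(β/2) + ln Γ(1+β/2); equivalently, g_{Nβ}^{1/N} converges to C_β = exp(1 − ln√(2π) + β/2 − (β/2)·ln(β/2)) · Γ(1+β/2). -/

import Mathlib

open MeasureTheory Real Filter Finset
open Topology
set_option maxHeartbeats 1000000


/-- `N_β = N + βN(N−1)/2`. -/
noncomputable def Nbeta (β : ℝ) (N : ℕ) : ℝ := N + β * N * (N - 1) / 2

/-- The constant `g_{Nβ}` from Proposition 5. -/
noncomputable def gN (β : ℝ) (N : ℕ) : ℝ :=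
  Real.exp (β / 2 * ∑ v ∈ Finset.Icc 1 N, (v : ℝ) * Real.log v) *
    ((N : ℝ) * ((N : ℝ) - 1) / 2) ^ (((N : ℝ) - 2) / 2) *
    Real.Gamma (Nbeta β N / 2) *
    (∏ j ∈ Finset.Icc 1 N, Real.Gamma (1 + β / 2) / Real.Gamma (1 + j * β / 2)) /
    (Real.sqrt Real.pi * Real.Gamma (((N : ℝ) - 1) / 2) *
      ((N : ℝ) * ((N : ℝ) - 1) / 2) ^ ((Nbeta β N - 1) / 2))

noncomputable def cst : ℝ := Real.log (2 * Real.pi) / 2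

noncomputable def err (x : ℝ) : ℝ :=
  Real.log (Real.Gamma x) - ((x - 1/2) * Real.log x - x + cst)

lemma logGamma_eq (x : ℝ) :
    Real.log (Real.Gamma x) = (x - 1/2) * Real.log x - x + cst + err x := by
  simp [err]

lemma tendsto_log_one_add_div :
    Tendsto (fun y : ℝ => Real.log (1 + y) / y) (𝓝[≠] 0) (𝓝 1) := by
  have h : HasDerivAt (fun y : ℝ => Real.log (1 + y)) 1 0 := by
    have h1 : HasDerivAt (fun y : ℝ => 1 + y) 1 0 := (hasDerivAt_id 0).const_add 1
    have h2 := (Real.hasDerivAt_log (by norm_num : (1:ℝ) + 0 ≠ 0)).comp 0 h1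
    exact h2.congr_deriv (by norm_num)
  have := hasDerivAt_iff_tendsto_slope.mp h
  refine this.congr (fun y => ?_)
  simp [slope_def_field, Real.log_one]

lemma tendsto_mul_log_one_add {a b : ℕ → ℝ} {L : ℝ}
    (hb : ∀ᶠ N in atTop, b N ≠ 0) (hb0 : Tendsto b atTop (𝓝 0))
    (hab : Tendsto (fun N => a N * b N) atTop (𝓝 L)) :
    Tendsto (fun N => a N * Real.log (1 + b N)) atTop (𝓝 L) := by
  have hbne : Tendsto b atTop (𝓝[≠] (0:ℝ)) := by
    rw [tendsto_nhdsWithin_iff]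
    exact ⟨hb0, hb⟩
  have h1 : Tendsto (fun N => Real.log (1 + b N) / b N) atTop (𝓝 1) :=
    tendsto_log_one_add_div.comp hbne
  have := hab.mul h1
  rw [mul_one] at this
  refine this.congr' ?_
  filter_upwards [hb] with N hN
  field_simp

lemma stirling_log :
    Tendsto (fun n : ℕ => Real.log (Nat.factorial n) - (((n:ℝ) + 1/2) * Real.log n - n + cst))
      atTop (𝓝 0) := by
  have h1 : Tendsto (fun n : ℕ => Real.log (Stirling.stirlingSeq n) - Real.log (Real.sqrt Real.pi))
      atTop (𝓝 0) := by
    have hc : ContinuousAt Real.log (Real.sqrt Real.pi) :=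
      Real.continuousAt_log (by positivity)
    have := (hc.tendsto.comp Stirling.tendsto_stirlingSeq_sqrt_pi).sub_const
      (Real.log (Real.sqrt Real.pi))
    simpa using this
  refine h1.congr' ?_
  filter_upwards [eventually_ge_atTop 1] with n hn
  have hn0 : (0:ℝ) < n := by exact_mod_cast hn
  rw [Stirling.log_stirlingSeq_formula, Real.log_mul two_ne_zero (ne_of_gt hn0),
    Real.log_div (ne_of_gt hn0) (Real.exp_ne_zero 1), Real.log_exp,
    Real.log_sqrt Real.pi_pos.le]
  simp only [cst]
  rw [Real.log_mul two_ne_zero (ne_of_gt Real.pi_pos)]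
  ring

lemma tendsto_one_div_nat : Tendsto (fun n : ℕ => 1/(n:ℝ)) atTop (𝓝 0) :=
  tendsto_one_div_atTop_nhds_zero_nat

lemma err_nat_succ : Tendsto (fun n : ℕ => err ((n:ℝ) + 1)) atTop (𝓝 0) := by
  have key : ∀ᶠ n : ℕ in atTop, err ((n:ℝ) + 1)
      = (Real.log (Nat.factorial n) - (((n:ℝ) + 1/2) * Real.log n - n + cst))
        + (1 - ((n:ℝ) + 1/2) * Real.log (1 + 1/(n:ℝ))) := by
    filter_upwards [eventually_ge_atTop 1] with n hn
    have hn0 : (0:ℝ) < n := by exact_mod_cast hn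
    have hγ : Real.Gamma ((n:ℝ) + 1) = Nat.factorial n := by
      exact_mod_cast Real.Gamma_nat_eq_factorial n
    have hlog : Real.log (1 + 1/(n:ℝ)) = Real.log ((n:ℝ)+1) - Real.log n := by
      rw [← Real.log_div (by positivity) (ne_of_gt hn0)]
      congr 1
      field_simp
    rw [err, hγ, hlog]
    ring
  have h2 : Tendsto (fun n : ℕ => ((n:ℝ) + 1/2) * Real.log (1 + 1/(n:ℝ))) atTop (𝓝 1) := by
    refine tendsto_mul_log_one_add ?_ ?_ ?_
    · filter_upwards [eventually_ge_atTop 1] with n hn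
      have hn0 : (0:ℝ) < n := by exact_mod_cast hn
      positivity
    · exact tendsto_one_div_nat
    · have he : ∀ᶠ n : ℕ in atTop, ((n:ℝ) + 1/2) * (1/(n:ℝ)) = 1 + (1/2) * (1/(n:ℝ)) := by
        filter_upwards [eventually_ge_atTop 1] with n hn
        have hn0 : (0:ℝ) < n := by exact_mod_cast hn
        field_simp
      have h3 : Tendsto (fun n : ℕ => 1 + (1/2) * (1/(n:ℝ))) atTop (𝓝 1) := by
        have := (tendsto_one_div_nat.const_mul (1/2:ℝ)).const_add (1:ℝ)
        simpa using this
      exact h3.congr' (he.mono fun _ h => h.symm)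
  have hfinal : Tendsto (fun n : ℕ =>
      (Real.log (Nat.factorial n) - (((n:ℝ) + 1/2) * Real.log n - n + cst))
        + (1 - ((n:ℝ) + 1/2) * Real.log (1 + 1/(n:ℝ)))) atTop (𝓝 0) := by
    have := stirling_log.add ((tendsto_const_nhds (x := (1:ℝ))).sub h2)
    simpa using this
  exact hfinal.congr' (key.mono fun _ h => h.symm)

lemma err_natCast : Tendsto (fun n : ℕ => err (n:ℝ)) atTop (𝓝 0) := by
  rw [← tendsto_add_atTop_iff_nat 1]
  exact err_nat_succ.congr (fun n => by norm_num)

lemma err_floor_bound {x : ℝ} (hx : 3 ≤ x) :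
    |err x - err (⌊x⌋₊:ℝ)| ≤ 2/((⌊x⌋₊:ℝ) - 1) := by
  set n : ℝ := (⌊x⌋₊ : ℝ) with hn
  have hn3 : (3:ℝ) ≤ n := by
    have h3n : (3:ℕ) ≤ ⌊x⌋₊ := Nat.le_floor (by exact_mod_cast hx)
    rw [hn]
    exact_mod_cast h3n
  have hnx : n ≤ x := Nat.floor_le (by linarith)
  have hxn1 : x < n + 1 := Nat.lt_floor_add_one x
  have hn0 : (0:ℝ) < n := by linarith
  have hn1 : (0:ℝ) < n - 1 := by linarith
  have hx0 : (0:ℝ) < x := by linarith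
  have ht0 : 0 ≤ x - n := by linarith
  have ht1 : x - n < 1 := by linarith
  have hΓn : 0 < Real.Gamma n := Real.Gamma_pos_of_pos hn0
  have hΓn1 : 0 < Real.Gamma (n-1) := Real.Gamma_pos_of_pos hn1
  have hΓx : 0 < Real.Gamma x := Real.Gamma_pos_of_pos hx0
  have hΓnn1 : 0 < Real.Gamma (n+1) := Real.Gamma_pos_of_pos (by linarith)
  -- the two Gamma recurrences in log form
  have hfn1 : Real.log (Real.Gamma (n+1)) = Real.log n + Real.log (Real.Gamma n) := by
    rw [Real.Gamma_add_one (ne_of_gt hn0), Real.log_mul (ne_of_gt hn0) (ne_of_gt hΓn)]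
  have hfn2 : Real.log (Real.Gamma n) = Real.log (n-1) + Real.log (Real.Gamma (n-1)) := by
    have h := Real.Gamma_add_one (s := n-1) (ne_of_gt hn1)
    rw [sub_add_cancel] at h
    rw [h, Real.log_mul (ne_of_gt hn1) (ne_of_gt hΓn1)]
  -- slope bounds from convexity
  have hmono := Real.convexOn_log_Gamma.slope_mono (Set.mem_Ioi.mpr hn0)
  have hupper : Real.log (Real.Gamma x) ≤ Real.log (Real.Gamma n) + (x - n) * Real.log n := by
    rcases eq_or_lt_of_le ht0 with h0 | h0
    · rw [← h0]
      have : x = n := by linarith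
      simp [this]
    · have hxm : x ∈ Set.Ioi (0:ℝ) \ {n} := ⟨Set.mem_Ioi.mpr hx0, by intro hmem; rw [Set.mem_singleton_iff] at hmem; linarith⟩
      have hn1m : n + 1 ∈ Set.Ioi (0:ℝ) \ {n} := ⟨Set.mem_Ioi.mpr (by linarith), by intro hmem; rw [Set.mem_singleton_iff] at hmem; linarith⟩
      have := hmono hxm hn1m (le_of_lt hxn1)
      rw [slope_def_field, slope_def_field] at this
      simp only [Function.comp] at this
      rw [hfn1] at this
      have h2 : (Real.log (Real.Gamma x) - Real.log (Real.Gamma n)) / (x - n) ≤ Real.log n := by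
        have h3 : (Real.log n + Real.log (Real.Gamma n) - Real.log (Real.Gamma n)) / (n + 1 - n) = Real.log n := by
          ring_nf
        calc (Real.log (Real.Gamma x) - Real.log (Real.Gamma n)) / (x - n) ≤ _ := this
        _ = Real.log n := h3
      rw [div_le_iff₀ h0] at h2
      linarith
  have hlower : Real.log (Real.Gamma n) + (x - n) * Real.log (n-1) ≤ Real.log (Real.Gamma x) := by
    rcases eq_or_lt_of_le ht0 with h0 | h0
    · rw [← h0]
      have : x = n := by linarith
      simp [this]
    · have hxm : x ∈ Set.Ioi (0:ℝ) \ {n} := ⟨Set.mem_Ioi.mpr hx0, by intro hmem; rw [Set.mem_singleton_iff] at hmem; linarith⟩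
      have hn1m : n - 1 ∈ Set.Ioi (0:ℝ) \ {n} := ⟨Set.mem_Ioi.mpr hn1, by intro hmem; rw [Set.mem_singleton_iff] at hmem; linarith⟩
      have hsl := hmono hn1m hxm (by linarith)
      rw [slope_def_field, slope_def_field] at hsl
      simp only [Function.comp] at hsl
      have hval : Real.log (Real.Gamma (n-1)) - Real.log (Real.Gamma n) = - Real.log (n-1) := by
        rw [hfn2]; ring
      have h2 : Real.log (n-1) ≤ (Real.log (Real.Gamma x) - Real.log (Real.Gamma n)) / (x - n) := by
        have h3 : (Real.log (Real.Gamma (n-1)) - Real.log (Real.Gamma n)) / (n - 1 - n) = Real.log (n-1) := by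
          rw [hval]; ring_nf
        calc Real.log (n-1) = _ := h3.symm
        _ ≤ _ := hsl
      rw [le_div_iff₀ h0] at h2
      linarith
  -- elementary log inequalities
  have hL1 : Real.log x - Real.log n ≤ (x - n) / n := by
    have h := Real.log_le_sub_one_of_pos (show (0:ℝ) < x/n by positivity)
    rw [Real.log_div (ne_of_gt hx0) (ne_of_gt hn0)] at h
    have h2 : x/n - 1 = (x - n)/n := by field_simp
    linarith
  have hL2 : (x - n) / x ≤ Real.log x - Real.log n := by
    have h := Real.log_le_sub_one_of_pos (show (0:ℝ) < n/x by positivity)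
    rw [Real.log_div (ne_of_gt hn0) (ne_of_gt hx0)] at h
    have h2 : n/x - 1 = -((x - n)/x) := by field_simp <;> ring
    linarith
  have hL3 : Real.log n - Real.log (n-1) ≤ 1/(n-1) := by
    have h := Real.log_le_sub_one_of_pos (show (0:ℝ) < n/(n-1) by positivity)
    rw [Real.log_div (ne_of_gt hn0) (ne_of_gt hn1)] at h
    have h2 : n/(n-1) - 1 = 1/(n-1) := by field_simp; ring
    linarith
  have hL4 : (0:ℝ) ≤ Real.log n - Real.log (n-1) := by
    have : Real.log (n-1) ≤ Real.log n := Real.log_le_log hn1 (by linarith)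
    linarith
  have hx12 : (0:ℝ) < x - 1/2 := by linarith
  rw [abs_le]
  constructor
  · -- lower bound
    have key1 : (x - 1/2) * (Real.log x - Real.log n) ≤ (x - 1/2) * ((x - n)/n) :=
      mul_le_mul_of_nonneg_left hL1 (le_of_lt hx12)
    have key2 : (x - n) * (Real.log n - Real.log (n-1)) ≤ 1/(n-1) := by
      calc (x - n) * (Real.log n - Real.log (n-1)) ≤ 1 * (Real.log n - Real.log (n-1)) :=
            mul_le_mul_of_nonneg_right (by linarith) hL4
      _ ≤ 1/(n-1) := by linarith
    have key3 : (x - 1/2) * ((x - n)/n) ≤ (x - n) + 1/(n-1) := by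
      have expand : (x - 1/2) * ((x - n)/n) = (x - n) + (x - n) * (x - n - 1/2) / n := by
        field_simp
        ring
      rw [expand]
      have hq : (x-n)*(x-n-1/2) ≤ 1/2 := by nlinarith [sq_nonneg (x - n), sq_nonneg (x - n - 1)]
      have h5 : (x - n) * (x - n - 1/2) / n ≤ (1/2)/n := by gcongr
      have h6 : (1:ℝ)/2/n ≤ 1/(n-1) := by
        rw [div_div]
        exact one_div_le_one_div_of_le hn1 (by linarith)
      linarith
    have key13 : (x - 1/2) * (Real.log x - Real.log n) ≤ (x - n) + 1/(n-1) := le_trans key1 key3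
    simp only [err]
    ring_nf at key2 key13 hlower ⊢
    linarith [hlower, key2, key13]
  · -- upper bound
    have key1 : (x - 1/2) * ((x - n)/x) ≤ (x - 1/2) * (Real.log x - Real.log n) :=
      mul_le_mul_of_nonneg_left hL2 (le_of_lt hx12)
    have key3 : (x - n) - 1/(n-1) ≤ (x - 1/2) * ((x - n)/x) := by
      have expand : (x - 1/2) * ((x - n)/x) = (x - n) - (x - n) / (2*x) := by
        field_simp
      rw [expand]
      have : (x - n) / (2*x) ≤ 1/(n-1) := by
        rw [div_le_div_iff₀ (by linarith) hn1]
        nlinarith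
      linarith
    have key13 : (x - n) - 1/(n-1) ≤ (x - 1/2) * (Real.log x - Real.log n) := le_trans key3 key1
    simp only [err]
    have hinvpos : 0 < (n-1)⁻¹ := by positivity
    ring_nf at key13 hupper hinvpos ⊢
    linarith [hupper, key13, hinvpos]

lemma err_tendsto : Tendsto err atTop (𝓝 0) := by
  have hfloor : Tendsto (fun x : ℝ => ⌊x⌋₊) atTop atTop := tendsto_nat_floor_atTop
  have h1 : Tendsto (fun x : ℝ => err (⌊x⌋₊:ℝ)) atTop (𝓝 0) := err_natCast.comp hfloor
  have h2 : Tendsto (fun x : ℝ => err x - err (⌊x⌋₊:ℝ)) atTop (𝓝 0) := by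
    apply squeeze_zero_norm' (a := fun x : ℝ => 2/((⌊x⌋₊:ℝ) - 1))
    · filter_upwards [eventually_ge_atTop (3:ℝ)] with x hx
      rw [Real.norm_eq_abs]
      exact err_floor_bound hx
    · have houter : Tendsto (fun m : ℕ => 2/((m:ℝ) - 1)) atTop (𝓝 0) := by
        apply Tendsto.div_atTop tendsto_const_nhds
        have := tendsto_atTop_add_const_right atTop (-1:ℝ) tendsto_natCast_atTop_atTop
        exact this.congr (fun m => by ring)
      exact houter.comp hfloor
  have h3 := h2.add h1
  simp only [sub_add_cancel] at h3
  simpa using h3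

lemma sum_Icc_cast (N : ℕ) : (∑ j ∈ Icc 1 N, (j:ℝ)) = (N:ℝ)*((N:ℝ)+1)/2 := by
  induction N with
  | zero => simp
  | succ n ih =>
    rw [Finset.sum_Icc_succ_top (by omega), ih]
    push_cast
    ring

lemma sum_Icc_log (N : ℕ) : (∑ j ∈ Icc 1 N, Real.log (j:ℝ)) = Real.log (Nat.factorial N) := by
  induction N with
  | zero => simp
  | succ n ih =>
    rw [Finset.sum_Icc_succ_top (by omega), ih, Nat.factorial_succ]
    rw [Nat.cast_mul, Real.log_mul (by exact_mod_cast Nat.succ_ne_zero n)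
      (by exact_mod_cast (Nat.factorial_pos n).ne')]
    push_cast
    ring

lemma cesaro_Icc {u : ℕ → ℝ} {l : ℝ} (h : Tendsto u atTop (𝓝 l)) :
    Tendsto (fun N : ℕ => (∑ j ∈ Icc 1 N, u j) / (N:ℝ)) atTop (𝓝 l) := by
  have hv : Tendsto (fun i : ℕ => u (1 + i)) atTop (𝓝 l) := by
    have h2 := (tendsto_add_atTop_iff_nat 1).mpr h
    exact h2.congr (fun i => by rw [add_comm])
  have hc := hv.cesaro
  refine hc.congr (fun N => ?_)
  rw [← Finset.Ico_add_one_right_eq_Icc, Finset.sum_Ico_eq_sum_range, inv_mul_eq_div]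
  norm_num


noncomputable def useq (β : ℝ) (j : ℕ) : ℝ :=
  err (1 + j * β / 2) + ((1 + (j:ℝ) * β) / 2) * Real.log (1 + 2 / ((j:ℝ) * β))

/-- Asymptotics of `g_{Nβ}`: `(1/N)·ln g_{Nβ} → 1 − ln√(2π) + β/2 − (β/2)ln(β/2) + ln Γ(1+β/2)`;
equivalently `g_{Nβ}^{1/N} → C_β`. -/
theorem gN_root_limit (β : ℝ) (hβ : 0 < β) :
    Tendsto (fun N : ℕ => 1 / (N : ℝ) * Real.log (gN β N)) atTop
      (nhds (1 - Real.log (Real.sqrt (2 * Real.pi)) + β / 2 - β / 2 * Real.log (β / 2) +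
        Real.log (Real.Gamma (1 + β / 2)))) ∧
    Tendsto (fun N : ℕ => gN β N ^ (1 / (N : ℝ))) atTop
      (nhds (Real.exp (1 - Real.log (Real.sqrt (2 * Real.pi)) + β / 2 -
        β / 2 * Real.log (β / 2)) * Real.Gamma (1 + β / 2))) := by
  have hβ2 : (0:ℝ) < β/2 := by linarith
  have hΓβ : 0 < Real.Gamma (1 + β/2) := Real.Gamma_pos_of_pos (by linarith)
  have hnat : Tendsto (fun N : ℕ => (N:ℝ)) atTop atTop := tendsto_natCast_atTop_atTop
  have hn1top : Tendsto (fun N : ℕ => (N:ℝ) - 1) atTop atTop := by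
    have := tendsto_atTop_add_const_right atTop (-1:ℝ) hnat
    exact this.congr (fun N => by ring)
  -- limits of the nine pieces
  have hA1 : Tendsto (fun N : ℕ => ((Nbeta β N - 1)/(2*(N:ℝ))) *
      Real.log (1 + 2/(β*((N:ℝ)-1)))) atTop (𝓝 (1/2)) := by
    apply tendsto_mul_log_one_add
    · filter_upwards [eventually_ge_atTop 2] with N hN
      have h2 : (2:ℝ) ≤ N := by exact_mod_cast hN
      have h1 : (0:ℝ) < (N:ℝ) - 1 := by linarith
      exact (div_pos two_pos (mul_pos hβ h1)).ne'
    · exact Tendsto.div_atTop tendsto_const_nhds (hn1top.const_mul_atTop hβ)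
    · have heq : ∀ᶠ N : ℕ in atTop, (1:ℝ)/2 + 1/(β*(N:ℝ)) =
          ((Nbeta β N - 1)/(2*(N:ℝ))) * (2/(β*((N:ℝ)-1))) := by
        filter_upwards [eventually_ge_atTop 2] with N hN
        have h2 : (2:ℝ) ≤ N := by exact_mod_cast hN
        have h0 : (0:ℝ) < N := by linarith
        have h1 : (0:ℝ) < (N:ℝ) - 1 := by linarith
        rw [Nbeta]
        field_simp
        ring
      have hlim : Tendsto (fun N : ℕ => (1:ℝ)/2 + 1/(β*(N:ℝ))) atTop (𝓝 (1/2)) := by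
        have h3 : Tendsto (fun N : ℕ => 1/(β*(N:ℝ))) atTop (𝓝 0) :=
          Tendsto.div_atTop tendsto_const_nhds (hnat.const_mul_atTop hβ)
        simpa using (tendsto_const_nhds (x := (1/2:ℝ))).add h3
      exact hlim.congr' heq
  have hA2 : Tendsto (fun N : ℕ => (-(1 + β*(N:ℝ))/(2*(N:ℝ))) * Real.log (β/2)) atTop
      (𝓝 ((-(β/2)) * Real.log (β/2))) := by
    have hlim : Tendsto (fun N : ℕ => -(1/(2*(N:ℝ))) - β/2) atTop (𝓝 (-(β/2))) := by
      have h3 : Tendsto (fun N : ℕ => 1/(2*(N:ℝ))) atTop (𝓝 0) :=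
        Tendsto.div_atTop tendsto_const_nhds (hnat.const_mul_atTop two_pos)
      have := (h3.neg).sub_const (β/2)
      simpa using this
    have heq : ∀ᶠ N : ℕ in atTop, (-(1/(2*(N:ℝ))) - β/2) * Real.log (β/2) =
        (-(1 + β*(N:ℝ))/(2*(N:ℝ))) * Real.log (β/2) := by
      filter_upwards [eventually_ge_atTop 1] with N hN
      have h0 : (0:ℝ) < N := by exact_mod_cast hN
      congr 1
      field_simp
      ring
    exact (hlim.mul_const _).congr' heq
  have hA3 : Tendsto (fun N : ℕ => (((N:ℝ)-2)/(2*(N:ℝ))) * Real.log (N:ℝ)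
      - (((N:ℝ) + 1/2)/(2*(N:ℝ))) * Real.log ((N:ℝ)+1)) atTop (𝓝 0) := by
    have hlog1 : Tendsto (fun N : ℕ => Real.log ((N:ℝ)+1)/((N:ℝ)+1)) atTop (𝓝 0) := by
      have h := Real.isLittleO_log_id_atTop.tendsto_div_nhds_zero
      have hg : Tendsto (fun N : ℕ => (N:ℝ)+1) atTop atTop :=
        tendsto_atTop_add_const_right atTop 1 hnat
      have := h.comp hg
      simpa [Function.comp_def] using this
    have hrat : Tendsto (fun N : ℕ => ((N:ℝ)+1)/(N:ℝ)) atTop (𝓝 1) := by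
      have heq : ∀ᶠ N : ℕ in atTop, (1:ℝ) + 1/(N:ℝ) = ((N:ℝ)+1)/(N:ℝ) := by
        filter_upwards [eventually_ge_atTop 1] with N hN
        have h0 : (0:ℝ) < N := by exact_mod_cast hN
        field_simp
      have := (tendsto_const_nhds (x := (1:ℝ))).add tendsto_one_div_nat
      simpa using this.congr' heq
    have hpart1 : Tendsto (fun N : ℕ =>
        (-(5/4:ℝ)) * (Real.log ((N:ℝ)+1)/((N:ℝ)+1)) * (((N:ℝ)+1)/(N:ℝ))) atTop (𝓝 0) := by
      have := ((tendsto_const_nhds (x := (-(5/4):ℝ))).mul hlog1).mul hrat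
      simpa using this
    have hpart2 : Tendsto (fun N : ℕ =>
        (((N:ℝ)-2)/(2*(N:ℝ))) * Real.log (1 + 1/(N:ℝ))) atTop (𝓝 0) := by
      apply tendsto_mul_log_one_add
      · filter_upwards [eventually_ge_atTop 1] with N hN
        have h0 : (0:ℝ) < N := by exact_mod_cast hN
        positivity
      · exact tendsto_one_div_nat
      · have heq : ∀ᶠ N : ℕ in atTop, (1/2)*(1/(N:ℝ)) - (1/(N:ℝ))*(1/(N:ℝ)) =
            (((N:ℝ)-2)/(2*(N:ℝ))) * (1/(N:ℝ)) := by
          filter_upwards [eventually_ge_atTop 1] with N hN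
          have h0 : (0:ℝ) < N := by exact_mod_cast hN
          field_simp
        have := (tendsto_one_div_nat.const_mul (1/2:ℝ)).sub
          (tendsto_one_div_nat.mul tendsto_one_div_nat)
        simpa using this.congr' heq
    have heq : ∀ᶠ N : ℕ in atTop,
        (-(5/4:ℝ)) * (Real.log ((N:ℝ)+1)/((N:ℝ)+1)) * (((N:ℝ)+1)/(N:ℝ))
          - (((N:ℝ)-2)/(2*(N:ℝ))) * Real.log (1 + 1/(N:ℝ)) =
        (((N:ℝ)-2)/(2*(N:ℝ))) * Real.log (N:ℝ)
          - (((N:ℝ) + 1/2)/(2*(N:ℝ))) * Real.log ((N:ℝ)+1) := by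
      filter_upwards [eventually_ge_atTop 1] with N hN
      have h0 : (0:ℝ) < N := by exact_mod_cast hN
      have h01 : (0:ℝ) < (N:ℝ)+1 := by linarith
      have hl : Real.log (1 + 1/(N:ℝ)) = Real.log ((N:ℝ)+1) - Real.log (N:ℝ) := by
        rw [show (1:ℝ) + 1/(N:ℝ) = ((N:ℝ)+1)/(N:ℝ) by field_simp,
          Real.log_div h01.ne' h0.ne']
      rw [hl]
      field_simp
      ring
    have := hpart1.sub hpart2
    simpa using this.congr' heq
  have hA5 : Tendsto (fun N : ℕ => (-((N:ℝ) + 1/2)/(N:ℝ)) * cst) atTop (𝓝 (-cst)) := by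
    have hlim : Tendsto (fun N : ℕ => -1 - (1/2)*(1/(N:ℝ))) atTop (𝓝 (-1)) := by
      have := (tendsto_const_nhds (x := (-1:ℝ))).sub (tendsto_one_div_nat.const_mul (1/2:ℝ))
      simpa using this
    have heq : ∀ᶠ N : ℕ in atTop, (-1 - (1/2)*(1/(N:ℝ))) * cst =
        (-((N:ℝ) + 1/2)/(N:ℝ)) * cst := by
      filter_upwards [eventually_ge_atTop 1] with N hN
      have h0 : (0:ℝ) < N := by exact_mod_cast hN
      congr 1
      field_simp
      ring
    have := hlim.mul_const cst
    simpa using this.congr' heq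
  have hA7 : Tendsto (fun N : ℕ => -(Real.log Real.pi/2)/(N:ℝ)) atTop (𝓝 0) :=
    Tendsto.div_atTop tendsto_const_nhds hnat
  have hA8 : Tendsto (fun N : ℕ =>
      (err (Nbeta β N/2) - err (((N:ℝ)-1)/2) - 1/2 * err ((N:ℝ)+1))/(N:ℝ)) atTop (𝓝 0) := by
    have hx1top : Tendsto (fun N : ℕ => Nbeta β N/2) atTop atTop := by
      apply tendsto_atTop_mono' atTop ?_ (hnat.atTop_div_const two_pos)
      filter_upwards [eventually_ge_atTop 1] with N hN
      have h1 : (1:ℝ) ≤ N := by exact_mod_cast hN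
      have h2 : 0 ≤ β*(N:ℝ)*((N:ℝ)-1)/2 := by
        apply div_nonneg _ (by norm_num)
        apply mul_nonneg (mul_nonneg hβ.le (by positivity))
        linarith
      rw [Nbeta]
      linarith
    have he1 : Tendsto (fun N : ℕ => err (Nbeta β N/2)) atTop (𝓝 0) := by
      have := err_tendsto.comp hx1top
      simpa [Function.comp_def] using this
    have he2 : Tendsto (fun N : ℕ => err (((N:ℝ)-1)/2)) atTop (𝓝 0) := by
      have := err_tendsto.comp (hn1top.atTop_div_const two_pos)
      simpa [Function.comp_def] using this
    have hnum : Tendsto (fun N : ℕ =>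
        err (Nbeta β N/2) - err (((N:ℝ)-1)/2) - 1/2 * err ((N:ℝ)+1)) atTop (𝓝 0) := by
      have := (he1.sub he2).sub (err_nat_succ.const_mul (1/2:ℝ))
      simpa using this
    exact Tendsto.div_atTop hnum hnat
  have huten : Tendsto (fun j : ℕ => useq β j) atTop (𝓝 1) := by
    have h1 : Tendsto (fun j : ℕ => err (1 + (j:ℝ)*β/2)) atTop (𝓝 0) := by
      have harg : Tendsto (fun j : ℕ => 1 + (j:ℝ)*β/2) atTop atTop :=
        tendsto_atTop_add_const_left _ 1 ((hnat.atTop_mul_const hβ).atTop_div_const two_pos)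
      have := err_tendsto.comp harg
      simpa [Function.comp_def] using this
    have h2 : Tendsto (fun j : ℕ => ((1 + (j:ℝ)*β)/2) * Real.log (1 + 2/((j:ℝ)*β))) atTop
        (𝓝 1) := by
      apply tendsto_mul_log_one_add
      · filter_upwards [eventually_ge_atTop 1] with j hj
        have h0 : (0:ℝ) < j := by exact_mod_cast hj
        positivity
      · exact Tendsto.div_atTop tendsto_const_nhds (hnat.atTop_mul_const hβ)
      · have heq : ∀ᶠ j : ℕ in atTop, (1:ℝ) + 1/((j:ℝ)*β) =
            ((1 + (j:ℝ)*β)/2) * (2/((j:ℝ)*β)) := by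
          filter_upwards [eventually_ge_atTop 1] with j hj
          have h0 : (0:ℝ) < j := by exact_mod_cast hj
          field_simp
          ring
        have := (tendsto_const_nhds (x := (1:ℝ))).add
          (Tendsto.div_atTop (tendsto_const_nhds (x := (1:ℝ))) (hnat.atTop_mul_const hβ))
        simpa using this.congr' heq
    have := h1.add h2
    simpa [useq] using this
  have hA9 : Tendsto (fun N : ℕ => -((∑ j ∈ Icc 1 N, useq β j)/(N:ℝ))) atTop (𝓝 (-1)) :=
    (cesaro_Icc huten).neg
  -- the key algebraic identity
  have hkey : ∀ N : ℕ, 3 ≤ N →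
      ((Nbeta β N - 1)/(2*(N:ℝ))) * Real.log (1 + 2/(β*((N:ℝ)-1)))
      + (-(1 + β*(N:ℝ))/(2*(N:ℝ))) * Real.log (β/2)
      + ((((N:ℝ)-2)/(2*(N:ℝ))) * Real.log (N:ℝ)
          - (((N:ℝ) + 1/2)/(2*(N:ℝ))) * Real.log ((N:ℝ)+1))
      + (3/2 + β/2)
      + (-((N:ℝ) + 1/2)/(N:ℝ)) * cst
      + Real.log (Real.Gamma (1 + β/2))
      + (-(Real.log Real.pi/2)/(N:ℝ))
      + (err (Nbeta β N/2) - err (((N:ℝ)-1)/2) - 1/2 * err ((N:ℝ)+1))/(N:ℝ)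
      + (-((∑ j ∈ Icc 1 N, useq β j)/(N:ℝ)))
      = 1/(N:ℝ) * Real.log (gN β N) := by
    intro N hN
    have hn3 : (3:ℝ) ≤ (N:ℝ) := by exact_mod_cast hN
    have hn0 : (0:ℝ) < N := by linarith
    have hn1 : (0:ℝ) < (N:ℝ) - 1 := by linarith
    have ha : (0:ℝ) < (N:ℝ)*((N:ℝ)-1)/2 := div_pos (mul_pos hn0 hn1) two_pos
    have haux : (0:ℝ) ≤ β*(N:ℝ)*((N:ℝ)-1)/2 :=
      div_nonneg (mul_nonneg (mul_nonneg hβ.le hn0.le) hn1.le) (by norm_num)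
    have hM : (0:ℝ) < Nbeta β N := by rw [Nbeta]; linarith
    have hx1 : 0 < Nbeta β N/2 := by linarith
    have hx2 : (0:ℝ) < ((N:ℝ)-1)/2 := by linarith
    have hΓ1 : 0 < Real.Gamma (Nbeta β N/2) := Real.Gamma_pos_of_pos hx1
    have hΓ2 : 0 < Real.Gamma (((N:ℝ)-1)/2) := Real.Gamma_pos_of_pos hx2
    have hΓj : ∀ j ∈ Icc 1 N, (0:ℝ) < Real.Gamma (1 + j*β/2) := by
      intro j hj
      apply Real.Gamma_pos_of_pos
      have h1 : (0:ℝ) ≤ (j:ℝ)*β := mul_nonneg (Nat.cast_nonneg j) hβ.le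
      linarith
    have hprodpos : 0 < ∏ j ∈ Icc 1 N, Real.Gamma (1+β/2)/Real.Gamma (1+j*β/2) :=
      Finset.prod_pos (fun j hj => div_pos hΓβ (hΓj j hj))
    have he : (0:ℝ) < Real.exp (β/2 * ∑ v ∈ Icc 1 N, (v:ℝ)*Real.log (v:ℝ)) := Real.exp_pos _
    have hp1 : 0 < ((N:ℝ)*((N:ℝ)-1)/2) ^ (((N:ℝ)-2)/2) := Real.rpow_pos_of_pos ha _
    have hp2 : 0 < ((N:ℝ)*((N:ℝ)-1)/2) ^ ((Nbeta β N - 1)/2) := Real.rpow_pos_of_pos ha _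
    have hsq : 0 < Real.sqrt Real.pi := Real.sqrt_pos.mpr Real.pi_pos
    have e0 : Real.log (gN β N) = β/2 * (∑ v ∈ Icc 1 N, (v:ℝ)*Real.log (v:ℝ))
        + (((N:ℝ)-2)/2) * Real.log ((N:ℝ)*((N:ℝ)-1)/2)
        + Real.log (Real.Gamma (Nbeta β N/2))
        + ((N:ℝ) * Real.log (Real.Gamma (1+β/2))
            - ∑ j ∈ Icc 1 N, Real.log (Real.Gamma (1 + j*β/2)))
        - (Real.log Real.pi/2 + Real.log (Real.Gamma (((N:ℝ)-1)/2))
            + ((Nbeta β N - 1)/2) * Real.log ((N:ℝ)*((N:ℝ)-1)/2)) := by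
      rw [gN, Real.log_div (mul_pos (mul_pos (mul_pos he hp1) hΓ1) hprodpos).ne'
            (mul_pos (mul_pos hsq hΓ2) hp2).ne',
          Real.log_mul (mul_pos (mul_pos he hp1) hΓ1).ne' hprodpos.ne',
          Real.log_mul (mul_pos he hp1).ne' hΓ1.ne',
          Real.log_mul he.ne' hp1.ne',
          Real.log_mul (mul_pos hsq hΓ2).ne' hp2.ne',
          Real.log_mul hsq.ne' hΓ2.ne',
          Real.log_exp, Real.log_rpow ha, Real.log_rpow ha,
          Real.log_sqrt Real.pi_pos.le,
          Real.log_prod (fun j hj => (div_pos hΓβ (hΓj j hj)).ne')]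
      rw [Finset.sum_congr rfl (fun j hj => Real.log_div hΓβ.ne' (hΓj j hj).ne'),
          Finset.sum_sub_distrib, Finset.sum_const, Nat.card_Icc]
      simp only [Nat.add_sub_cancel, nsmul_eq_mul]
      try ring
    have hTj : ∀ j ∈ Icc 1 N, Real.log (Real.Gamma (1 + j*β/2)) =
        β/2*((j:ℝ)*Real.log (j:ℝ)) + 1/2*Real.log (j:ℝ)
          + (β/2*Real.log (β/2) - β/2)*(j:ℝ)
          + (Real.log (β/2)/2 - 1 + cst) + useq β j := by
      intro j hj
      have hj1 : (1:ℝ) ≤ (j:ℝ) := by exact_mod_cast (Finset.mem_Icc.mp hj).1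
      have hj0 : (0:ℝ) < (j:ℝ) := by linarith
      have hjβ : (0:ℝ) < (j:ℝ)*β := mul_pos hj0 hβ
      have hq : (0:ℝ) < 1 + 2/((j:ℝ)*β) := by
        have := div_pos two_pos hjβ
        linarith
      have hfac : 1 + (j:ℝ)*β/2 = (j:ℝ) * (β/2) * (1 + 2/((j:ℝ)*β)) := by
        field_simp
        ring
      have hlsplit : Real.log (1 + (j:ℝ)*β/2) =
          Real.log (j:ℝ) + Real.log (β/2) + Real.log (1 + 2/((j:ℝ)*β)) := by
        rw [hfac, Real.log_mul (mul_pos hj0 hβ2).ne' hq.ne', Real.log_mul hj0.ne' hβ2.ne']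
      rw [logGamma_eq (1 + (j:ℝ)*β/2), hlsplit]
      simp only [useq]
      ring
    have hT : (∑ j ∈ Icc 1 N, Real.log (Real.Gamma (1 + j*β/2))) =
        β/2 * (∑ v ∈ Icc 1 N, (v:ℝ)*Real.log (v:ℝ))
          + 1/2*(((N:ℝ)+1/2)*Real.log ((N:ℝ)+1) - ((N:ℝ)+1) + cst + err ((N:ℝ)+1))
          + (β/2*Real.log (β/2) - β/2)*((N:ℝ)*((N:ℝ)+1)/2)
          + (N:ℝ)*(Real.log (β/2)/2 - 1 + cst)
          + ∑ j ∈ Icc 1 N, useq β j := by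
      rw [Finset.sum_congr rfl hTj]
      simp only [Finset.sum_add_distrib, ← Finset.mul_sum, Finset.sum_const, Nat.card_Icc,
        Nat.add_sub_cancel, nsmul_eq_mul]
      rw [sum_Icc_cast, sum_Icc_log, ← Real.Gamma_nat_eq_factorial, logGamma_eq]
      push_cast
      ring
    have hloga : Real.log ((N:ℝ)*((N:ℝ)-1)/2) = Real.log (N:ℝ) + Real.log (((N:ℝ)-1)/2) := by
      rw [show (N:ℝ)*((N:ℝ)-1)/2 = (N:ℝ) * (((N:ℝ)-1)/2) by ring,
        Real.log_mul hn0.ne' hx2.ne']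
    have hq2 : (0:ℝ) < 1 + 2/(β*((N:ℝ)-1)) := by
      have := div_pos two_pos (mul_pos hβ hn1)
      linarith
    have hlgx1 : Real.log (Real.Gamma (Nbeta β N/2)) =
        (Nbeta β N/2 - 1/2) * (Real.log (β/2) + Real.log (1 + 2/(β*((N:ℝ)-1)))
          + (Real.log (N:ℝ) + Real.log (((N:ℝ)-1)/2)))
          - Nbeta β N/2 + cst + err (Nbeta β N/2) := by
      rw [logGamma_eq]
      have hfac : Nbeta β N/2 = ((N:ℝ)*((N:ℝ)-1)/2) * (β/2) * (1 + 2/(β*((N:ℝ)-1))) := by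
        rw [Nbeta]
        field_simp
        ring
      have hsplit : Real.log (Nbeta β N/2) = Real.log (β/2) + Real.log (1 + 2/(β*((N:ℝ)-1)))
          + (Real.log (N:ℝ) + Real.log (((N:ℝ)-1)/2)) := by
        rw [hfac, Real.log_mul (mul_pos ha hβ2).ne' hq2.ne', Real.log_mul ha.ne' hβ2.ne', hloga]
        ring
      rw [hsplit]
    rw [e0, hT, hlgx1, logGamma_eq (((N:ℝ)-1)/2), hloga]
    simp only [Nbeta]
    field_simp
    ring
  -- assemble the first limit
  have t1 := hA1.add hA2
  have t2 := t1.add hA3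
  have t3 := t2.add (tendsto_const_nhds (x := (3/2 + β/2 : ℝ)))
  have t4 := t3.add hA5
  have t5 := t4.add (tendsto_const_nhds (x := Real.log (Real.Gamma (1 + β/2))))
  have t6 := t5.add hA7
  have t7 := t6.add hA8
  have htot := t7.add hA9
  have hev : (fun N : ℕ =>
      ((Nbeta β N - 1)/(2*(N:ℝ))) * Real.log (1 + 2/(β*((N:ℝ)-1)))
      + (-(1 + β*(N:ℝ))/(2*(N:ℝ))) * Real.log (β/2)
      + ((((N:ℝ)-2)/(2*(N:ℝ))) * Real.log (N:ℝ)
          - (((N:ℝ) + 1/2)/(2*(N:ℝ))) * Real.log ((N:ℝ)+1))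
      + (3/2 + β/2)
      + (-((N:ℝ) + 1/2)/(N:ℝ)) * cst
      + Real.log (Real.Gamma (1 + β/2))
      + (-(Real.log Real.pi/2)/(N:ℝ))
      + (err (Nbeta β N/2) - err (((N:ℝ)-1)/2) - 1/2 * err ((N:ℝ)+1))/(N:ℝ)
      + (-((∑ j ∈ Icc 1 N, useq β j)/(N:ℝ))))
      =ᶠ[atTop] (fun N : ℕ => 1/(N:ℝ) * Real.log (gN β N)) := by
    filter_upwards [eventually_ge_atTop 3] with N hN using hkey N hN
  have hconst : 1/2 + (-(β/2)) * Real.log (β/2) + 0 + (3/2 + β/2) + (-cst)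
      + Real.log (Real.Gamma (1 + β/2)) + 0 + 0 + (-1)
      = 1 - Real.log (Real.sqrt (2*Real.pi)) + β/2 - β/2 * Real.log (β/2)
        + Real.log (Real.Gamma (1 + β/2)) := by
    rw [Real.log_sqrt (by positivity)]
    simp only [cst]
    ring
  have part1 : Tendsto (fun N : ℕ => 1/(N:ℝ) * Real.log (gN β N)) atTop
      (𝓝 (1 - Real.log (Real.sqrt (2*Real.pi)) + β/2 - β/2 * Real.log (β/2)
        + Real.log (Real.Gamma (1 + β/2)))) := by
    rw [← hconst]
    exact htot.congr' hev
  refine ⟨part1, ?_⟩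
  have hgpos : ∀ᶠ N : ℕ in atTop, 0 < gN β N := by
    filter_upwards [eventually_ge_atTop 2] with N hN
    have hn2 : (2:ℝ) ≤ N := by exact_mod_cast hN
    have hn0 : (0:ℝ) < N := by linarith
    have hn1 : (0:ℝ) < (N:ℝ) - 1 := by linarith
    have ha : (0:ℝ) < (N:ℝ)*((N:ℝ)-1)/2 := div_pos (mul_pos hn0 hn1) two_pos
    have haux : (0:ℝ) ≤ β*(N:ℝ)*((N:ℝ)-1)/2 :=
      div_nonneg (mul_nonneg (mul_nonneg hβ.le hn0.le) hn1.le) (by norm_num)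
    have hM : (0:ℝ) < Nbeta β N/2 := by
      rw [Nbeta]
      linarith
    rw [gN]
    apply div_pos
    · refine mul_pos (mul_pos (mul_pos (Real.exp_pos _) (Real.rpow_pos_of_pos ha _))
        (Real.Gamma_pos_of_pos hM)) (Finset.prod_pos (fun j hj => div_pos hΓβ ?_))
      apply Real.Gamma_pos_of_pos
      have h1 : (0:ℝ) ≤ (j:ℝ)*β := mul_nonneg (Nat.cast_nonneg j) hβ.le
      linarith
    · exact mul_pos (mul_pos (Real.sqrt_pos.mpr Real.pi_pos)
        (Real.Gamma_pos_of_pos (div_pos hn1 two_pos))) (Real.rpow_pos_of_pos ha _)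
  have hexp : Tendsto (fun N : ℕ => Real.exp (1/(N:ℝ) * Real.log (gN β N))) atTop
      (𝓝 (Real.exp (1 - Real.log (Real.sqrt (2*Real.pi)) + β/2 - β/2 * Real.log (β/2)
        + Real.log (Real.Gamma (1 + β/2))))) :=
    (Real.continuous_exp.tendsto _).comp part1
  have hev2 : (fun N : ℕ => Real.exp (1/(N:ℝ) * Real.log (gN β N)))
      =ᶠ[atTop] (fun N : ℕ => gN β N ^ (1/(N:ℝ))) := by
    filter_upwards [hgpos] with N hg
    rw [Real.rpow_def_of_pos hg, mul_comm]
  have hconst2 : Real.exp (1 - Real.log (Real.sqrt (2*Real.pi)) + β/2 - β/2 * Real.log (β/2)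
      + Real.log (Real.Gamma (1 + β/2)))
      = Real.exp (1 - Real.log (Real.sqrt (2*Real.pi)) + β/2 - β/2 * Real.log (β/2))
        * Real.Gamma (1 + β/2) := by
    rw [Real.exp_add, Real.exp_log hΓβ]
  rw [← hconst2]
  exact hexp.congr' hev2
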